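/- For the random walk on the network (G, c) and every vertex u, the probability that two independent random walks started at u collide at only finitely many times satisfies q_fin(u) = Σ_v Σ_{n≥0} p_n(u, v)^2 · q_0(v), where the outer sum is over all vertices v. -/

import Mathlib

open MeasureTheory
open scoped ENNReal NNReal Classical

namespace CollisionsStmt

variable {V : Type*}

/-- The total conductance `c(u) = Σ_v c(u,v)` at a vertex `u` of the network. -/
noncomputable def cWeight (c : V → V → ℝ≥0) (u : V) : ℝ≥0∞ := ∑' v, (c u v : ℝ≥0∞)

/-- One-step transition probabilities of the random walk on the network `(G, c)`:
`p(u,v) = c(u,v)/c(u)`. -/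
noncomputable def netStep (c : V → V → ℝ≥0) (u v : V) : ℝ≥0∞ :=
  (c u v : ℝ≥0∞) / cWeight c u

/-- The `n`-step transition probabilities of the random walk on the network `(G, c)`. -/
noncomputable def netPn (c : V → V → ℝ≥0) : ℕ → V → V → ℝ≥0∞
  | 0, u, v => if u = v then 1 else 0
  | n + 1, u, v => ∑' w, netStep c u w * netPn c n w v

/-- The graph underlying the network: an edge between `u` and `v` whenever `c(u,v) > 0`. -/
def netGraph (c : V → V → ℝ≥0) : SimpleGraph V :=
  SimpleGraph.fromRel (fun u v => c u v ≠ 0)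

/-- `μ` is the law (on path space, via the Ionescu–Tulcea trajectory construction) of
two independent walks with one-step transition probabilities `p`, started at `a` and `b`
respectively; equivalently, the Markov chain on `V × V` with kernel `p ⊗ p` started at `(a, b)`.
The law is characterized by being a probability measure with the prescribed
finite-dimensional (cylinder) distributions. -/
def IsPairWalkMeasure [MeasurableSpace V] (p : V → V → ℝ≥0∞) (a b : V)
    (μ : Measure (ℕ → V × V)) : Prop :=
  IsProbabilityMeasure μ ∧
    ∀ (n : ℕ) (x : ℕ → V × V),
      μ {ω | ∀ i ≤ n, ω i = x i} =
        (if x 0 = (a, b) then (1 : ℝ≥0∞) else 0) *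
          ∏ i ∈ Finset.range n, (p (x i).1 (x (i + 1)).1 * p (x i).2 (x (i + 1)).2)

/-- The event that the two walks do not collide at any time `n ≥ 1`. -/
def noCollision : Set (ℕ → V × V) := {ω | ∀ n ≥ 1, (ω n).1 ≠ (ω n).2}

/-- The event that the two walks have their last collision at the vertex `v`: for some
`n ≥ 0`, `X_n = Y_n = v` and `X_m ≠ Y_m` for all `m > n`. -/
def lastCollisionAt (v : V) : Set (ℕ → V × V) :=
  {ω | ∃ n : ℕ, ω n = (v, v) ∧ ∀ m > n, (ω m).1 ≠ (ω m).2}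

/-- The event that the two walks collide at only finitely many times. -/
def finCollisions : Set (ℕ → V × V) := {ω | {n : ℕ | (ω n).1 = (ω n).2}.Finite}

/-- The event that the two walks collide at infinitely many times. -/
def infCollisions : Set (ℕ → V × V) := {ω | {n : ℕ | (ω n).1 = (ω n).2}.Infinite}

/-! ### Auxiliary machinery for the proof -/

/-- A uniform `ℝ≥0∞`-valued indicator of a proposition. -/
noncomputable def ind (p : Prop) : ℝ≥0∞ := if p then 1 else 0

lemma ind_pos {p : Prop} (h : p) : ind p = 1 := by simp [ind, h]

lemma ind_neg {p : Prop} (h : ¬ p) : ind p = 0 := by simp [ind, h]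

lemma ind_congr {p q : Prop} (h : p ↔ q) : ind p = ind q := by
  simp only [ind]; exact if_congr h rfl rfl

lemma ite_eq_ind {p : Prop} [Decidable p] : (if p then (1 : ℝ≥0∞) else 0) = ind p := by
  split_ifs with h
  · rw [ind_pos h]
  · rw [ind_neg h]


section PextAux
variable {α : Type*}

/-- Extend a finite path to `ℕ` by repeating the last value. -/
def pext {N : ℕ} (y : Fin (N + 1) → α) : ℕ → α := fun i => y ⟨min i N, by omega⟩

lemma pext_le {N : ℕ} (y : Fin (N + 1) → α) {i : ℕ} (h : i ≤ N) :
    pext y i = y ⟨i, by omega⟩ := by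
  simp [pext, Nat.min_eq_left h]

lemma pext_fin {N : ℕ} (y : Fin (N + 1) → α) (j : Fin (N + 1)) :
    pext y (j : ℕ) = y j := by
  rw [pext_le _ (by omega)]

lemma pext_cons_zero {N : ℕ} (w : α) (t : Fin (N + 1) → α) :
    pext (Fin.cons w t : Fin (N + 2) → α) 0 = w := by
  rw [pext_le _ (Nat.zero_le _)]; exact Fin.cons_zero _ _

lemma pext_cons_succ {N : ℕ} (w : α) (t : Fin (N + 1) → α) (i : ℕ) :
    pext (Fin.cons w t : Fin (N + 2) → α) (i + 1) = pext t i := by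
  show (Fin.cons w t : Fin (N + 2) → α) ⟨min (i+1) (N+1), by omega⟩ = t ⟨min i N, by omega⟩
  have h1 : (⟨min (i+1) (N+1), by omega⟩ : Fin (N + 2)) = Fin.succ ⟨min i N, by omega⟩ := by
    apply Fin.ext; simp [Fin.succ]
  rw [h1, Fin.cons_succ]

lemma cyl_measurable [MeasurableSpace α] [MeasurableSingletonClass α] (N : ℕ) (x : ℕ → α) :
    MeasurableSet {ω : ℕ → α | ∀ i ≤ N, ω i = x i} := by
  have : {ω : ℕ → α | ∀ i ≤ N, ω i = x i}
      = ⋂ i ∈ Finset.Iic N, (fun ω : ℕ → α => ω i) ⁻¹' {x i} := by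
    ext ω; simp
  rw [this]
  exact MeasurableSet.biInter (Finset.Iic N).countable_toSet
    (fun i _ => measurable_pi_apply i (measurableSet_singleton _))

/-- Key lemma: the measure of an event determined by coordinates `≤ N` is the sum of
the cylinder measures. -/
lemma measure_eq_tsum_cyl [Countable α] [MeasurableSpace α] [MeasurableSingletonClass α]
    (μ : Measure (ℕ → α)) (N : ℕ) (P : (ℕ → α) → Prop)
    (hP : ∀ ω ω' : ℕ → α, (∀ i ≤ N, ω i = ω' i) → P ω → P ω') :
    μ {ω | P ω} =
      ∑' y : Fin (N + 1) → α,
        ind (P (pext y)) * μ {ω | ∀ i ≤ N, ω i = pext y i} := by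
  have hagree : ∀ (y : Fin (N+1) → α) (ω : ℕ → α), (∀ i ≤ N, ω i = pext y i) →
      ∀ j : Fin (N+1), ω (j : ℕ) = y j := by
    intro y ω h j
    rw [h _ (by omega), pext_fin]
  have hset : {ω | P ω} =
      ⋃ y : Fin (N + 1) → α,
        (if P (pext y) then {ω | ∀ i ≤ N, ω i = pext y i} else ∅) := by
    ext ω
    simp only [Set.mem_setOf_eq, Set.mem_iUnion]
    constructor
    · intro hω
      refine ⟨fun i => ω i, ?_⟩
      have hag : ∀ i ≤ N, ω i = pext (fun i : Fin (N+1) => ω i) i := by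
        intro i hi; rw [pext_le _ hi]
      rw [if_pos (hP ω _ hag hω)]
      exact hag
    · rintro ⟨y, hy⟩
      by_cases h : P (pext y)
      · rw [if_pos h] at hy
        exact hP (pext y) ω (fun i hi => ((hy : ∀ i ≤ N, ω i = pext y i) i hi).symm) h
      · rw [if_neg h] at hy; exact absurd hy (Set.notMem_empty ω)
  have hdisj : Pairwise (Function.onFun Disjoint fun y : Fin (N + 1) → α =>
      (if P (pext y) then {ω : ℕ → α | ∀ i ≤ N, ω i = pext y i} else ∅)) := by
    intro y y' hne
    simp only [Function.onFun]
    split_ifs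
    · rw [Set.disjoint_left]
      intro ω hω hω'
      apply hne
      funext j
      rw [← hagree y ω hω j, ← hagree y' ω hω' j]
    all_goals simp
  rw [hset, measure_iUnion hdisj (by
    intro y
    split_ifs
    · exact cyl_measurable N _
    · exact MeasurableSet.empty)]
  refine tsum_congr fun y => ?_
  by_cases h : P (pext y) <;> simp [ind, h]

/-- The `v`-side path determined by `b` on times `1,…,k`, equal to `v0` at other times. -/
def Ypath (v0 : α) (k : ℕ) (b : Fin k → α) : ℕ → α :=
  fun m => if h : 1 ≤ m ∧ m ≤ k then b ⟨m - 1, by omega⟩ else v0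

lemma Ypath_zero (v0 : α) (k : ℕ) (b : Fin k → α) : Ypath v0 k b 0 = v0 := by
  simp [Ypath]

lemma Ypath_pos (v0 : α) (k : ℕ) (b : Fin k → α) {j : ℕ} (h1 : 1 ≤ j) (h2 : j ≤ k) :
    Ypath v0 k b j = b ⟨j - 1, by omega⟩ := by
  rw [Ypath, dif_pos ⟨h1, h2⟩]

lemma pext_cons_eq_Ypath (t : α) (k : ℕ) (b : Fin k → α) {m : ℕ} (hm : m ≤ k) :
    pext (Fin.cons t b : Fin (k + 1) → α) m = Ypath t k b m := by
  match m with
  | 0 =>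
      rw [Ypath_zero, pext_le _ (Nat.zero_le _)]
      exact Fin.cons_zero _ _
  | j + 1 =>
      rw [Ypath_pos t k b (by omega) hm, pext_le _ hm]
      have h1 : (⟨j + 1, by omega⟩ : Fin (k + 1)) = Fin.succ ⟨j, by omega⟩ := by
        apply Fin.ext; rfl
      rw [h1, Fin.cons_succ]
      exact congrArg b (Fin.ext (by simp))

/-- Split a path of length `n + k` into its first `n + 1` points and the remaining `k`. -/
def splitEquiv (n k : ℕ) (α : Type*) :
    ((Fin (n + 1) → α) × (Fin k → α)) ≃ (Fin (n + k + 1) → α) where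
  toFun ab i :=
    if h : (i : ℕ) ≤ n then ab.1 ⟨i, by omega⟩
    else ab.2 ⟨(i : ℕ) - n - 1, by have := i.isLt; omega⟩
  invFun y :=
    (fun i => y ⟨i, by have := i.isLt; omega⟩, fun j => y ⟨n + 1 + j, by have := j.isLt; omega⟩)
  left_inv := by
    rintro ⟨a, b⟩
    refine Prod.ext ?_ ?_
    · funext i
      simp only
      rw [dif_pos (show ((⟨(i : ℕ), by have := i.isLt; omega⟩ : Fin (n + k + 1)) : ℕ) ≤ n from
        Nat.lt_succ_iff.mp i.isLt)]
    · funext j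
      simp only
      rw [dif_neg (by simp; omega)]
      congr 1
      apply Fin.ext
      simp
      omega
  right_inv := by
    intro y
    funext i
    simp only
    by_cases h : (i : ℕ) ≤ n
    · rw [dif_pos (by simpa using h)]
    · rw [dif_neg (by simpa using h)]
      congr 1
      apply Fin.ext
      simp
      omega

lemma split_pext_le {n k : ℕ} (a : Fin (n + 1) → α) (b : Fin k → α) {i : ℕ} (h : i ≤ n) :
    pext (splitEquiv n k α (a, b)) i = pext a i := by
  rw [pext_le _ (by omega : i ≤ n + k), pext_le _ h]
  show dite _ _ _ = _
  rw [dif_pos (show ((⟨i, by omega⟩ : Fin (n + k + 1)) : ℕ) ≤ n from h)]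

lemma split_pext_mid {n k : ℕ} (a : Fin (n + 1) → α) (b : Fin k → α) {j : ℕ}
    (h1 : 1 ≤ j) (h2 : j ≤ k) :
    pext (splitEquiv n k α (a, b)) (n + j) = b ⟨j - 1, by omega⟩ := by
  rw [pext_le _ (by omega : n + j ≤ n + k)]
  show dite _ _ _ = _
  rw [dif_neg (show ¬ ((⟨n + j, by omega⟩ : Fin (n + k + 1)) : ℕ) ≤ n by
    simp only [Fin.val_mk]; omega)]
  exact congrArg _ (by apply Fin.ext; simp only [Fin.val_mk]; omega)

end PextAux

/-! ### Path sums -/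

/-- The transition kernel of the pair of independent walks. -/
noncomputable def q2 (c : V → V → ℝ≥0) (s t : V × V) : ℝ≥0∞ :=
  netStep c s.1 t.1 * netStep c s.2 t.2

/-- Path-sum form of `netPn`. -/
noncomputable def ps1 (c : V → V → ℝ≥0) (n : ℕ) (u v : V) : ℝ≥0∞ :=
  ∑' s : Fin (n + 1) → V,
    ind (pext s 0 = u) * ind (pext s n = v) *
      ∏ i ∈ Finset.range n, netStep c (pext s i) (pext s (i + 1))

/-- Path-sum form of the `n`-step pair-transition probability from `(u,u)` to `(v,v)`. -/
noncomputable def ps2 (c : V → V → ℝ≥0) (n : ℕ) (u v : V) : ℝ≥0∞ :=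
  ∑' y : Fin (n + 1) → V × V,
    ind (pext y 0 = (u, u)) * ind (pext y n = (v, v)) *
      ∏ i ∈ Finset.range n, q2 c (pext y i) (pext y (i + 1))

lemma ps1_eq_netPn (c : V → V → ℝ≥0) (n : ℕ) (u v : V) :
    ps1 c n u v = netPn c n u v := by
  induction n generalizing u with
  | zero =>
      rw [ps1, ← Equiv.tsum_eq (Equiv.funUnique (Fin 1) V).symm]
      have h0 : ∀ a : V, pext ((Equiv.funUnique (Fin 1) V).symm a) 0 = a := by
        intro a; rw [pext_le _ le_rfl]; rfl
      calc ∑' a : V, ind (pext ((Equiv.funUnique (Fin 1) V).symm a) 0 = u) *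
              ind (pext ((Equiv.funUnique (Fin 1) V).symm a) 0 = v) *
              ∏ i ∈ Finset.range 0, netStep c (pext ((Equiv.funUnique (Fin 1) V).symm a) i)
                (pext ((Equiv.funUnique (Fin 1) V).symm a) (i+1))
          = ∑' a : V, (if a = u then (if u = v then (1:ℝ≥0∞) else 0) else 0) := by
            refine tsum_congr fun a => ?_
            rw [h0, Finset.prod_range_zero, mul_one]
            by_cases h1 : a = u
            · subst h1; simp [ind]
            · simp [ind, h1]
        _ = if u = v then 1 else 0 := tsum_ite_eq u _
        _ = netPn c 0 u v := rfl
  | succ n ih =>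
      have hR : netPn c (n+1) u v
          = ∑' t : Fin (n+1) → V, netStep c u (pext t 0) *
              (ind (pext t n = v) *
                ∏ i ∈ Finset.range n, netStep c (pext t i) (pext t (i+1))) := by
        show (∑' w, netStep c u w * netPn c n w v) = _
        calc (∑' w, netStep c u w * netPn c n w v)
            = ∑' w, netStep c u w * ps1 c n w v := by
              exact tsum_congr fun w => by rw [ih w]
          _ = ∑' w, ∑' t : Fin (n+1) → V, netStep c u w *
                (ind (pext t 0 = w) * ind (pext t n = v) *
                  ∏ i ∈ Finset.range n, netStep c (pext t i) (pext t (i+1))) := by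
              exact tsum_congr fun w => by rw [ps1, ← ENNReal.tsum_mul_left]
          _ = ∑' t : Fin (n+1) → V, ∑' w, netStep c u w *
                (ind (pext t 0 = w) * ind (pext t n = v) *
                  ∏ i ∈ Finset.range n, netStep c (pext t i) (pext t (i+1))) :=
              ENNReal.tsum_comm
          _ = _ := by
              refine tsum_congr fun t => ?_
              rw [tsum_eq_single (pext t 0) ?_]
              · simp [ind, mul_assoc]
              · intro w hw
                simp [ind, Ne.symm hw]
      rw [hR, ps1, ← Equiv.tsum_eq (Fin.consEquiv (fun _ : Fin (n + 2) => V))]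
      have hL : ∀ wt : V × (Fin (n+1) → V),
          ind (pext ((Fin.consEquiv fun _ : Fin (n+2) => V) wt) 0 = u) *
            ind (pext ((Fin.consEquiv fun _ : Fin (n+2) => V) wt) (n + 1) = v) *
            ∏ i ∈ Finset.range (n + 1), netStep c (pext ((Fin.consEquiv fun _ : Fin (n+2) => V) wt) i)
              (pext ((Fin.consEquiv fun _ : Fin (n+2) => V) wt) (i + 1))
          = ind (wt.1 = u) *
              (netStep c wt.1 (pext wt.2 0) * (ind (pext wt.2 n = v) *
                ∏ i ∈ Finset.range n, netStep c (pext wt.2 i) (pext wt.2 (i + 1)))) := by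
        rintro ⟨w, t⟩
        have hc : (Fin.consEquiv fun _ : Fin (n+2) => V) (w, t) = Fin.cons w t := rfl
        rw [hc, Finset.prod_range_succ']
        simp only [pext_cons_zero, pext_cons_succ]
        ring
      calc ∑' wt : V × (Fin (n+1) → V),
            ind (pext ((Fin.consEquiv fun _ : Fin (n+2) => V) wt) 0 = u) *
              ind (pext ((Fin.consEquiv fun _ : Fin (n+2) => V) wt) (n + 1) = v) *
              ∏ i ∈ Finset.range (n + 1), netStep c (pext ((Fin.consEquiv fun _ : Fin (n+2) => V) wt) i)
                (pext ((Fin.consEquiv fun _ : Fin (n+2) => V) wt) (i + 1))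
          = ∑' (w : V) (t : Fin (n+1) → V), ind (w = u) *
              (netStep c w (pext t 0) * (ind (pext t n = v) *
                ∏ i ∈ Finset.range n, netStep c (pext t i) (pext t (i + 1)))) := by
            rw [tsum_congr hL]
            exact ENNReal.tsum_prod (f := fun w t => ind (w = u) *
              (netStep c w (pext t 0) * (ind (pext t n = v) *
                ∏ i ∈ Finset.range n, netStep c (pext t i) (pext t (i + 1)))))
        _ = ∑' t : Fin (n+1) → V, netStep c u (pext t 0) *
              (ind (pext t n = v) *
                ∏ i ∈ Finset.range n, netStep c (pext t i) (pext t (i+1))) := by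
            rw [tsum_eq_single u ?_]
            · simp [ind]
            · intro w hw; simp [ind, hw]

lemma ps2_eq_sq (c : V → V → ℝ≥0) (n : ℕ) (u v : V) :
    ps2 c n u v = ps1 c n u v * ps1 c n u v := by
  rw [ps2, ← Equiv.tsum_eq (Equiv.arrowProdEquivProdArrow (Fin (n+1)) (fun _ => V) (fun _ => V)).symm]
  have hx : ∀ st : (Fin (n+1) → V) × (Fin (n+1) → V), ∀ m : ℕ,
      pext ((Equiv.arrowProdEquivProdArrow (Fin (n+1)) (fun _ => V) (fun _ => V)).symm st) m
        = (pext st.1 m, pext st.2 m) := by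
    intro st m; rfl
  calc ∑' st : (Fin (n+1) → V) × (Fin (n+1) → V),
        ind (pext ((Equiv.arrowProdEquivProdArrow (Fin (n+1)) (fun _ => V) (fun _ => V)).symm st) 0 = (u, u)) *
          ind (pext ((Equiv.arrowProdEquivProdArrow (Fin (n+1)) (fun _ => V) (fun _ => V)).symm st) n = (v, v)) *
          ∏ i ∈ Finset.range n, q2 c (pext ((Equiv.arrowProdEquivProdArrow (Fin (n+1)) (fun _ => V) (fun _ => V)).symm st) i)
            (pext ((Equiv.arrowProdEquivProdArrow (Fin (n+1)) (fun _ => V) (fun _ => V)).symm st) (i + 1))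
      = ∑' (s : Fin (n+1) → V) (t : Fin (n+1) → V),
          (ind (pext s 0 = u) * ind (pext s n = v) *
            ∏ i ∈ Finset.range n, netStep c (pext s i) (pext s (i + 1))) *
          (ind (pext t 0 = u) * ind (pext t n = v) *
            ∏ i ∈ Finset.range n, netStep c (pext t i) (pext t (i + 1))) := by
        rw [tsum_congr (fun st => ?_)]
        · exact ENNReal.tsum_prod (f := fun s t =>
            (ind (pext s 0 = u) * ind (pext s n = v) *
              ∏ i ∈ Finset.range n, netStep c (pext s i) (pext s (i + 1))) *
            (ind (pext t 0 = u) * ind (pext t n = v) *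
              ∏ i ∈ Finset.range n, netStep c (pext t i) (pext t (i + 1))))
        · simp only [hx st, q2, Prod.mk.injEq]
          rw [Finset.prod_mul_distrib]
          by_cases h1 : pext st.1 0 = u <;> by_cases h2 : pext st.2 0 = u <;>
            by_cases h3 : pext st.1 n = v <;> by_cases h4 : pext st.2 n = v <;>
            simp [ind, h1, h2, h3, h4]
    _ = ps1 c n u v * ps1 c n u v := by
        rw [ps1, ← ENNReal.tsum_mul_right]
        exact tsum_congr fun s => by rw [ENNReal.tsum_mul_left]

/-! ### The Markov decomposition at a fixed last-collision time -/

lemma measure_B [Countable V] [MeasurableSpace V] [DiscreteMeasurableSpace V]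
    (c : V → V → ℝ≥0) {μu μv : Measure (ℕ → V × V)} {u v : V}
    (hu : IsPairWalkMeasure (netStep c) u u μu)
    (hv : IsPairWalkMeasure (netStep c) v v μv) (n k : ℕ) :
    μu {ω | ω n = (v, v) ∧ ∀ m, n < m → m ≤ n + k → (ω m).1 ≠ (ω m).2}
      = ps2 c n u v * μv {ω | ∀ m, 1 ≤ m → m ≤ k → (ω m).1 ≠ (ω m).2} := by
  classical
  set T := V × V
  have hcylu : ∀ x : ℕ → (V × V), μu {ω | ∀ i ≤ n + k, ω i = x i}
      = ind (x 0 = (u, u)) *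
        ∏ i ∈ Finset.range (n + k), q2 c (x i) (x (i + 1)) := by
    intro x; rw [hu.2 (n + k) x, ite_eq_ind]; simp only [q2]
  have hcylv : ∀ x : ℕ → (V × V), μv {ω | ∀ i ≤ k, ω i = x i}
      = ind (x 0 = (v, v)) *
        ∏ i ∈ Finset.range k, q2 c (x i) (x (i + 1)) := by
    intro x; rw [hv.2 k x, ite_eq_ind]; simp only [q2]
  -- abbreviations
  set A : (Fin (n+1) → T) → ℝ≥0∞ := fun a =>
    ind (pext a 0 = (u, u)) * ind (pext a n = (v, v)) *
      ∏ i ∈ Finset.range n, q2 c (pext a i) (pext a (i + 1)) with hA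
  set B : (Fin k → T) → ℝ≥0∞ := fun b =>
    ind (∀ m, 1 ≤ m → m ≤ k → (Ypath ((v, v) : T) k b m).1 ≠ (Ypath ((v, v) : T) k b m).2) *
      ∏ j ∈ Finset.range k, q2 c (Ypath ((v, v) : T) k b j) (Ypath ((v, v) : T) k b (j + 1)) with hB
  -- left-hand side
  have hPu : ∀ ω ω' : ℕ → T, (∀ i ≤ n + k, ω i = ω' i) →
      (ω n = (v, v) ∧ ∀ m, n < m → m ≤ n + k → (ω m).1 ≠ (ω m).2) →
      (ω' n = (v, v) ∧ ∀ m, n < m → m ≤ n + k → (ω' m).1 ≠ (ω' m).2) := by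
    intro ω ω' h hω
    refine ⟨by rw [← h n (by omega)]; exact hω.1, ?_⟩
    intro m hm1 hm2
    rw [← h m (by omega)]
    exact hω.2 m hm1 hm2
  have hLsum : μu {ω | ω n = (v, v) ∧ ∀ m, n < m → m ≤ n + k → (ω m).1 ≠ (ω m).2}
      = ∑' y : Fin (n + k + 1) → T,
          ind (pext y n = (v, v) ∧ ∀ m, n < m → m ≤ n + k → (pext y m).1 ≠ (pext y m).2) *
          (ind (pext y 0 = (u, u)) *
            ∏ i ∈ Finset.range (n + k), q2 c (pext y i) (pext y (i + 1))) := by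
    rw [measure_eq_tsum_cyl μu (n + k)
      (fun ω => ω n = (v, v) ∧ ∀ m, n < m → m ≤ n + k → (ω m).1 ≠ (ω m).2) hPu]
    exact tsum_congr fun y => by rw [hcylu (pext y)]
  -- factor the left-hand side
  have hfac : ∀ ab : (Fin (n+1) → T) × (Fin k → T),
      ind (pext (splitEquiv n k T ab) n = (v, v) ∧
          ∀ m, n < m → m ≤ n + k →
            (pext (splitEquiv n k T ab) m).1 ≠ (pext (splitEquiv n k T ab) m).2) *
      (ind (pext (splitEquiv n k T ab) 0 = (u, u)) *
        ∏ i ∈ Finset.range (n + k),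
          q2 c (pext (splitEquiv n k T ab) i) (pext (splitEquiv n k T ab) (i + 1)))
      = A ab.1 * B ab.2 := by
    rintro ⟨a, b⟩
    set x : ℕ → T := pext (splitEquiv n k T (a, b)) with hxdef
    have fle : ∀ i ≤ n, x i = pext a i := fun i hi => split_pext_le a b hi
    by_cases hvv : pext a n = (v, v)
    · have fnj : ∀ m j : ℕ, m = n + j → j ≤ k → x m = Ypath ((v,v) : T) k b j := by
        intro m j hm hj
        subst hm
        match j with
        | 0 => rw [Ypath_zero]; rw [show n + 0 = n from rfl, fle n le_rfl]; exact hvv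
        | j + 1 =>
            rw [hxdef, split_pext_mid a b (by omega) hj, Ypath_pos _ _ _ (by omega) hj]
      have hcond : (x n = (v, v) ∧ ∀ m, n < m → m ≤ n + k → (x m).1 ≠ (x m).2)
          ↔ (∀ m, 1 ≤ m → m ≤ k → (Ypath ((v,v) : T) k b m).1 ≠ (Ypath ((v,v) : T) k b m).2) := by
        constructor
        · rintro ⟨-, h2⟩ m hm1 hm2
          have := h2 (n + m) (by omega) (by omega)
          rwa [fnj (n + m) m rfl hm2] at this
        · intro h
          refine ⟨by rw [fle n le_rfl]; exact hvv, ?_⟩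
          intro m hm1 hm2
          rw [fnj m (m - n) (by omega) (by omega)]
          exact h (m - n) (by omega) (by omega)
      have hprod : ∏ i ∈ Finset.range (n + k), q2 c (x i) (x (i + 1))
          = (∏ i ∈ Finset.range n, q2 c (pext a i) (pext a (i + 1))) *
            ∏ j ∈ Finset.range k, q2 c (Ypath ((v,v) : T) k b j) (Ypath ((v,v) : T) k b (j + 1)) := by
        rw [Finset.prod_range_add]
        congr 1
        · refine Finset.prod_congr rfl fun i hi => ?_
          have hi' := Finset.mem_range.mp hi
          rw [fle i (by omega), fle (i + 1) (by omega)]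
        · refine Finset.prod_congr rfl fun j hj => ?_
          have hj' := Finset.mem_range.mp hj
          rw [fnj (n + j) j rfl (by omega), fnj (n + j + 1) (j + 1) (by omega) (by omega)]
      rw [ind_congr hcond, hprod, fle 0 (by omega)]
      simp only [hA, hB, ind_pos hvv]
      ring
    · have h1 : ¬ (x n = (v, v) ∧ ∀ m, n < m → m ≤ n + k → (x m).1 ≠ (x m).2) := by
        intro h; exact hvv (by rw [← fle n le_rfl]; exact h.1)
      simp only [hA, hB, ind_neg h1, ind_neg hvv]
      simp
  -- right-hand side: the no-collision sum
  have hPv : ∀ ω ω' : ℕ → T, (∀ i ≤ k, ω i = ω' i) →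
      (∀ m, 1 ≤ m → m ≤ k → (ω m).1 ≠ (ω m).2) →
      (∀ m, 1 ≤ m → m ≤ k → (ω' m).1 ≠ (ω' m).2) := by
    intro ω ω' h hω m hm1 hm2
    rw [← h m (by omega)]
    exact hω m hm1 hm2
  have hRsum : μv {ω | ∀ m, 1 ≤ m → m ≤ k → (ω m).1 ≠ (ω m).2} = ∑' b : Fin k → T, B b := by
    rw [measure_eq_tsum_cyl μv k (fun ω => ∀ m, 1 ≤ m → m ≤ k → (ω m).1 ≠ (ω m).2) hPv]
    rw [← Equiv.tsum_eq (Fin.consEquiv (fun _ : Fin (k + 1) => T))]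
    have hterm : ∀ tb : T × (Fin k → T),
        ind (∀ m, 1 ≤ m → m ≤ k →
            (pext ((Fin.consEquiv fun _ : Fin (k+1) => T) tb) m).1 ≠
              (pext ((Fin.consEquiv fun _ : Fin (k+1) => T) tb) m).2) *
          μv {ω | ∀ i ≤ k, ω i = pext ((Fin.consEquiv fun _ : Fin (k+1) => T) tb) i}
        = ind (tb.1 = (v, v)) * B tb.2 := by
      rintro ⟨t, b⟩
      have hc : (Fin.consEquiv fun _ : Fin (k+1) => T) (t, b) = Fin.cons t b := rfl
      rw [hc, hcylv (pext (Fin.cons t b : Fin (k+1) → T))]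
      have h0 : pext (Fin.cons t b : Fin (k+1) → T) 0 = t := by
        rw [pext_le _ (Nat.zero_le _)]; exact Fin.cons_zero _ _
      by_cases ht : t = (v, v)
      · subst ht
        have gk : ∀ m ≤ k, pext (Fin.cons ((v,v) : T) b : Fin (k+1) → T) m
            = Ypath ((v,v) : T) k b m := fun m hm => pext_cons_eq_Ypath _ k b hm
        have hcnd : (∀ m, 1 ≤ m → m ≤ k →
            (pext (Fin.cons ((v,v) : T) b : Fin (k+1) → T) m).1 ≠
              (pext (Fin.cons ((v,v) : T) b : Fin (k+1) → T) m).2)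
            ↔ (∀ m, 1 ≤ m → m ≤ k →
              (Ypath ((v,v) : T) k b m).1 ≠ (Ypath ((v,v) : T) k b m).2) := by
          constructor
          · intro h m hm1 hm2
            have := h m hm1 hm2
            rwa [gk m hm2] at this
          · intro h m hm1 hm2
            rw [gk m hm2]
            exact h m hm1 hm2
        have hpr : ∏ i ∈ Finset.range k,
              q2 c (pext (Fin.cons ((v,v) : T) b : Fin (k+1) → T) i)
                (pext (Fin.cons ((v,v) : T) b : Fin (k+1) → T) (i + 1))
            = ∏ i ∈ Finset.range k,
                q2 c (Ypath ((v,v) : T) k b i) (Ypath ((v,v) : T) k b (i + 1)) := by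
          refine Finset.prod_congr rfl fun i hi => ?_
          have hi' := Finset.mem_range.mp hi
          rw [gk i (by omega), gk (i + 1) (by omega)]
        rw [ind_congr hcnd, hpr, h0, ind_pos rfl, hB]
        ring
      · rw [h0, ind_neg ht]
        simp
    rw [tsum_congr hterm,
      ENNReal.tsum_prod (f := fun t b => ind (t = (v, v)) * B b)]
    calc ∑' (t : T) (b : Fin k → T), ind (t = (v, v)) * B b
        = ∑' t : T, ind (t = (v, v)) * ∑' b : Fin k → T, B b := by
          exact tsum_congr fun t => ENNReal.tsum_mul_left
      _ = ∑' b : Fin k → T, B b := by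
          rw [tsum_eq_single ((v, v) : T) ?_]
          · simp [ind]
          · intro t ht; simp [ind, ht]
  -- put the pieces together
  rw [hLsum, ← Equiv.tsum_eq (splitEquiv n k T), tsum_congr hfac,
    ENNReal.tsum_prod (f := fun a b => A a * B b), hRsum]
  calc ∑' (a : Fin (n+1) → T) (b : Fin k → T), A a * B b
      = ∑' a : Fin (n+1) → T, A a * ∑' b : Fin k → T, B b :=
        tsum_congr fun a => ENNReal.tsum_mul_left
    _ = (∑' a : Fin (n+1) → T, A a) * ∑' b : Fin k → T, B b := ENNReal.tsum_mul_right
    _ = ps2 c n u v * ∑' b : Fin k → T, B b := by rw [ps2]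

/-! ### Taking limits -/

lemma eventSet_measurable [Countable V] [MeasurableSpace V] [DiscreteMeasurableSpace V]
    (m : ℕ) (s : Set (V × V)) : MeasurableSet {ω : ℕ → V × V | ω m ∈ s} :=
  measurable_pi_apply m (s.to_countable.measurableSet)

lemma measure_A [Countable V] [MeasurableSpace V] [DiscreteMeasurableSpace V]
    (c : V → V → ℝ≥0) {μu μv : Measure (ℕ → V × V)} {u v : V}
    (hu : IsPairWalkMeasure (netStep c) u u μu)
    (hv : IsPairWalkMeasure (netStep c) v v μv) (n : ℕ) :
    μu {ω | ω n = (v, v) ∧ ∀ m, n < m → (ω m).1 ≠ (ω m).2}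
      = ps2 c n u v * μv noCollision := by
  haveI : IsProbabilityMeasure μu := hu.1
  haveI : IsProbabilityMeasure μv := hv.1
  set Bs : ℕ → Set (ℕ → V × V) := fun k =>
    {ω | ω n = (v, v) ∧ ∀ m, n < m → m ≤ n + k → (ω m).1 ≠ (ω m).2} with hBs
  set Ns : ℕ → Set (ℕ → V × V) := fun k =>
    {ω | ∀ m, 1 ≤ m → m ≤ k → (ω m).1 ≠ (ω m).2} with hNs
  have hBmeas : ∀ k, MeasurableSet (Bs k) := by
    intro k
    have : Bs k = {ω : ℕ → V × V | ω n ∈ ({(v, v)} : Set (V × V))} ∩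
        ⋂ (m : ℕ) (_ : n < m ∧ m ≤ n + k), {ω : ℕ → V × V | ω m ∈ {t : V × V | t.1 ≠ t.2}} := by
      ext ω
      simp only [hBs, Set.mem_setOf_eq, Set.mem_inter_iff, Set.mem_iInter, Set.mem_singleton_iff]
      constructor
      · rintro ⟨h1, h2⟩; exact ⟨h1, fun m hm => h2 m hm.1 hm.2⟩
      · rintro ⟨h1, h2⟩; exact ⟨h1, fun m hm1 hm2 => h2 m ⟨hm1, hm2⟩⟩
    rw [this]
    exact (eventSet_measurable n _).inter
      (MeasurableSet.iInter fun m => MeasurableSet.iInter fun _ => eventSet_measurable m _)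
  have hNmeas : ∀ k, MeasurableSet (Ns k) := by
    intro k
    have : Ns k = ⋂ (m : ℕ) (_ : 1 ≤ m ∧ m ≤ k),
        {ω : ℕ → V × V | ω m ∈ {t : V × V | t.1 ≠ t.2}} := by
      ext ω
      simp only [hNs, Set.mem_setOf_eq, Set.mem_iInter]
      constructor
      · intro h m hm; exact h m hm.1 hm.2
      · intro h m hm1 hm2; exact h m ⟨hm1, hm2⟩
    rw [this]
    exact MeasurableSet.iInter fun m => MeasurableSet.iInter fun _ => eventSet_measurable m _
  have hBinter : {ω : ℕ → V × V | ω n = (v, v) ∧ ∀ m, n < m → (ω m).1 ≠ (ω m).2} = ⋂ k, Bs k := by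
    ext ω
    simp only [hBs, Set.mem_setOf_eq, Set.mem_iInter]
    constructor
    · rintro ⟨h1, h2⟩ k; exact ⟨h1, fun m hm1 _ => h2 m hm1⟩
    · intro h
      refine ⟨(h 0).1, fun m hm1 => ?_⟩
      exact (h m).2 m hm1 (by omega)
  have hNinter : (noCollision : Set (ℕ → V × V)) = ⋂ k, Ns k := by
    ext ω
    simp only [noCollision, hNs, Set.mem_setOf_eq, Set.mem_iInter]
    constructor
    · intro h k m hm1 _; exact h m hm1
    · intro h m hm1; exact (h m) m hm1 le_rfl
  have hBdir : Directed (fun x1 x2 : Set (ℕ → V × V) => x1 ⊇ x2) Bs := by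
    intro k l
    refine ⟨max k l, ?_, ?_⟩ <;>
      · rintro ω ⟨h1, h2⟩
        exact ⟨h1, fun m hm1 hm2 => h2 m hm1 (by omega)⟩
  have hNdir : Directed (fun x1 x2 : Set (ℕ → V × V) => x1 ⊇ x2) Ns := by
    intro k l
    refine ⟨max k l, ?_, ?_⟩ <;>
      · intro ω h m hm1 hm2
        exact h m hm1 (by omega)
  have hμB : ∀ k, μu (Bs k) = ps2 c n u v * μv (Ns k) := fun k => measure_B c hu hv n k
  have hiB : μu {ω : ℕ → V × V | ω n = (v, v) ∧ ∀ m, n < m → (ω m).1 ≠ (ω m).2}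
      = ⨅ k, μu (Bs k) := by
    rw [hBinter]
    exact Directed.measure_iInter (fun k => (hBmeas k).nullMeasurableSet) hBdir
      ⟨0, measure_ne_top _ _⟩
  have hiN : μv noCollision = ⨅ k, μv (Ns k) := by
    rw [hNinter]
    exact Directed.measure_iInter (fun k => (hNmeas k).nullMeasurableSet) hNdir
      ⟨0, measure_ne_top _ _⟩
  rw [hiB, hiN]
  rcases eq_or_ne (ps2 c n u v) 0 with h0 | h0
  · rw [h0, zero_mul]
    refine le_antisymm ?_ (zero_le)
    refine iInf_le_of_le 0 ?_
    rw [hμB 0, h0, zero_mul]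
  · have hfin : ps2 c n u v ≠ ∞ := by
      have hN0 : μv (Ns 0) = 1 := by
        have : Ns 0 = Set.univ := by
          ext ω
          simp only [hNs, Set.mem_setOf_eq, Set.mem_univ, iff_true]
          intro m hm1 hm2; omega
        rw [this, measure_univ]
      have h1 : ps2 c n u v = μu (Bs 0) := by rw [hμB 0, hN0, mul_one]
      rw [h1]
      exact measure_ne_top _ _
    rw [ENNReal.mul_iInf_of_ne h0 hfin]
    exact iInf_congr hμB

/-! ### The main theorem -/

/-- for the network random walk,
`q_fin(u) = Σ_v Σ_{n ≥ 0} p_n(u, v)^2 · q_0(v)`. -/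
theorem network_finitely_many_collisions_decomposition
    [Countable V] [MeasurableSpace V] [DiscreteMeasurableSpace V]
    (c : V → V → ℝ≥0)
    (hsymm : ∀ u v : V, c u v = c v u)
    (hloc : ∀ u : V, {v : V | c u v ≠ 0}.Finite)
    (hconn : (netGraph c).Connected)
    (hpos : ∀ u : V, 0 < cWeight c u)
    (μ : V → Measure (ℕ → V × V))
    (hμ : ∀ w : V, IsPairWalkMeasure (netStep c) w w (μ w))
    (u : V) :
    μ u finCollisions = ∑' v : V, ∑' n : ℕ, (netPn c n u v) ^ 2 * μ v noCollision := by
  classical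
  haveI : IsProbabilityMeasure (μ u) := (hμ u).1
  set As : V × ℕ → Set (ℕ → V × V) := fun p =>
    {ω | ω p.2 = (p.1, p.1) ∧ ∀ m, p.2 < m → (ω m).1 ≠ (ω m).2} with hAs
  have hAmeas : ∀ p, MeasurableSet (As p) := by
    rintro ⟨v, n⟩
    have : As (v, n) = {ω : ℕ → V × V | ω n ∈ ({(v, v)} : Set (V × V))} ∩
        ⋂ (m : ℕ) (_ : n < m), {ω : ℕ → V × V | ω m ∈ {t : V × V | t.1 ≠ t.2}} := by
      ext ω
      simp only [hAs, Set.mem_setOf_eq, Set.mem_inter_iff, Set.mem_iInter,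
        Set.mem_singleton_iff]
    rw [this]
    exact (eventSet_measurable n _).inter
      (MeasurableSet.iInter fun m => MeasurableSet.iInter fun _ => eventSet_measurable m _)
  have hdisj : Pairwise (Function.onFun Disjoint As) := by
    rintro ⟨v, n⟩ ⟨v', n'⟩ hne
    simp only [Function.onFun]
    rw [Set.disjoint_left]
    rintro ω ⟨h1, h2⟩ ⟨h1', h2'⟩
    rcases lt_trichotomy n n' with h | h | h
    · have := h2 n' h
      rw [h1'] at this
      exact this rfl
    · subst h
      have hv : v = v' := by
        have := h1.symm.trans h1'
        exact congrArg Prod.fst this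
      exact hne (by rw [hv])
    · have := h2' n h
      rw [h1] at this
      exact this rfl
  have hΩ0meas : MeasurableSet {ω : ℕ → V × V | ω 0 = (u, u)} :=
    eventSet_measurable 0 {(u, u)}
  have hΩ0 : μ u {ω : ℕ → V × V | ω 0 = (u, u)} = 1 := by
    have h := (hμ u).2 0 (fun _ => ((u, u) : V × V))
    have hset : {ω : ℕ → V × V | ∀ i ≤ 0, ω i = (fun _ => ((u, u) : V × V)) i}
        = {ω : ℕ → V × V | ω 0 = (u, u)} := by
      ext ω
      simp only [Set.mem_setOf_eq]
      constructor
      · intro hω; exact hω 0 le_rfl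
      · intro hω i hi
        have : i = 0 := by omega
        rw [this]; exact hω
    rw [hset] at h
    simpa using h
  have hcompl : μ u {ω : ℕ → V × V | ω 0 = (u, u)}ᶜ = 0 := by
    rw [prob_compl_eq_one_sub hΩ0meas, hΩ0, tsub_self]
  have hsub1 : (⋃ p, As p) ⊆ finCollisions := by
    intro ω hω
    rw [Set.mem_iUnion] at hω
    obtain ⟨⟨v, n⟩, h1, h2⟩ := hω
    refine Set.Finite.subset (Set.finite_Iic n) ?_
    intro m hm
    by_contra hmn
    exact h2 m (by simpa using hmn) hm
  have hsub2 : finCollisions ∩ {ω : ℕ → V × V | ω 0 = (u, u)} ⊆ ⋃ p, As p := by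
    rintro ω ⟨(hfin : {m : ℕ | (ω m).1 = (ω m).2}.Finite), h0⟩
    have h0' : ω 0 = (u, u) := h0
    have hne : ({m : ℕ | (ω m).1 = (ω m).2}).Nonempty := ⟨0, by show (ω 0).1 = (ω 0).2; rw [h0']⟩
    have hFne : hfin.toFinset.Nonempty := by
      rwa [Set.Finite.toFinset_nonempty]
    set n := hfin.toFinset.max' hFne with hn
    have hnF : n ∈ hfin.toFinset := Finset.max'_mem _ hFne
    have hcoll : (ω n).1 = (ω n).2 := by
      rwa [Set.Finite.mem_toFinset] at hnF
    rw [Set.mem_iUnion]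
    refine ⟨((ω n).1, n), Prod.ext rfl hcoll.symm, ?_⟩
    intro m hm hc
    have hmF : m ∈ hfin.toFinset := (Set.Finite.mem_toFinset hfin).mpr hc
    have := Finset.le_max' _ m hmF
    omega
  have hmain : μ u finCollisions = μ u (⋃ p, As p) := by
    refine le_antisymm ?_ (measure_mono hsub1)
    calc μ u finCollisions
        = μ u (finCollisions ∩ {ω : ℕ → V × V | ω 0 = (u, u)}) +
            μ u (finCollisions \ {ω : ℕ → V × V | ω 0 = (u, u)}) :=
          (measure_inter_add_diff _ hΩ0meas).symm
      _ ≤ μ u (⋃ p, As p) + μ u ({ω : ℕ → V × V | ω 0 = (u, u)}ᶜ) :=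
          add_le_add (measure_mono hsub2) (measure_mono (Set.diff_subset_compl _ _))
      _ = μ u (⋃ p, As p) := by rw [hcompl, add_zero]
  rw [hmain, measure_iUnion hdisj hAmeas,
    ENNReal.tsum_prod (f := fun v n => μ u (As (v, n)))]
  refine tsum_congr fun v => tsum_congr fun n => ?_
  calc μ u (As (v, n)) = ps2 c n u v * μ v noCollision := measure_A c (hμ u) (hμ v) n
    _ = (netPn c n u v) ^ 2 * μ v noCollision := by
        rw [ps2_eq_sq c n u v, ps1_eq_netPn c n u v, ← pow_two]
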